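/- Let Γ be a connected finite simplicial graph and A_Γ the associated right-angled Artin group. The following are equivalent: (i) any two vertices whose equivalence classes are maximal are equivalent (there is exactly one maximal equivalence class); (ii) there is a vertex v adjacent to every other vertex of Γ (equivalently Γ = J_[v] for some v ∈ V_ab); (iii) the center of A_Γ is nontrivial. -/

import Mathlib

open SimpleGraph Monoid Monoid.CoprodI Monoid.PushoutI

namespace RaagPaper

variable {V : Type*}

/-- The link of a vertex: the set of vertices adjacent to it. -/
def lk (G : SimpleGraph V) (v : V) : Set V := G.neighborSet v

/-- The (closed) star of a vertex: `st(v) = lk(v) ∪ {v}`. -/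
def st (G : SimpleGraph V) (v : V) : Set V := insert v (G.neighborSet v)

/-- The preorder on vertices: `v ≤ w` iff `lk(v) ⊆ st(w)`. -/
def vle (G : SimpleGraph V) (v w : V) : Prop := lk G v ⊆ st G w

/-- Equivalence of vertices: `v ∼ w` iff `v ≤ w` and `w ≤ v`. -/
def vequiv (G : SimpleGraph V) (v w : V) : Prop := vle G v w ∧ vle G w v

/-- The equivalence class `[v]` of a vertex `v`. -/
def cls (G : SimpleGraph V) (v : V) : Set V := {u | vequiv G u v}

/-- `[v]` is maximal with respect to the partial order induced by `≤`. -/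
def IsMaximalClass (G : SimpleGraph V) (v : V) : Prop := ∀ w, vle G v w → vle G w v

/-- `L_[v] = lk(v) \ [v]`. -/
def Lset (G : SimpleGraph V) (v : V) : Set V := lk G v \ cls G v

/-- `J_[v] = [v] ∪ L_[v]`, the join associated to `[v]`. -/
def Jset (G : SimpleGraph V) (v : V) : Set V := cls G v ∪ Lset G v

/-- `v ∈ V_ab` : any two distinct vertices of `[v]` are adjacent (so `A_[v]` is abelian). -/
def Vab (G : SimpleGraph V) (v : V) : Prop :=
  ∀ x ∈ cls G v, ∀ y ∈ cls G v, x ≠ y → G.Adj x y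

/-- The commutator relations defining the right-angled Artin group of `G`. -/
def raagRels (G : SimpleGraph V) : Set (FreeGroup V) :=
  {r | ∃ u w : V, G.Adj u w ∧
    r = FreeGroup.of u * FreeGroup.of w * (FreeGroup.of u)⁻¹ * (FreeGroup.of w)⁻¹}

/-- The right-angled Artin group `A_Γ`. -/
abbrev Raag (G : SimpleGraph V) : Type _ := PresentedGroup (raagRels G)

/-- The generator of `A_Γ` corresponding to a vertex. -/
def gen (G : SimpleGraph V) (v : V) : Raag G := PresentedGroup.of v

/-- The special subgroup `A_Θ` generated by a set `Θ` of vertices. -/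
def Asub (G : SimpleGraph V) (Θ : Set V) : Subgroup (Raag G) :=
  Subgroup.closure (gen G '' Θ)

/-- The subgroup of inner automorphisms of a group. -/
def Inn (A : Type*) [Group A] : Subgroup (MulAut A) := (MulAut.conj : A →* MulAut A).range

instance (A : Type*) [Group A] : (Inn A).Normal := by
  constructor
  intro n hn φ
  obtain ⟨g, rfl⟩ := hn
  exact ⟨φ g, by ext x; simp [Inn, MulAut.conj]⟩

/-- The outer automorphism group `Out(A) = Aut(A)/Inn(A)`. -/
abbrev OutG (A : Type*) [Group A] : Type _ := MulAut A ⧸ Inn A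

/-- The canonical projection `Aut(A) → Out(A)`. -/
def outMk (A : Type*) [Group A] : MulAut A →* OutG A := QuotientGroup.mk' (Inn A)



section PushoutCenter

variable {ι : Type*} {G : ι → Type*} [∀ i, Group (G i)] {H : Type*} [Group H]
  (φ : ∀ i, H →* G i)

/-- Reduced-ness of a `NeWord` in terms of its letters. -/
theorem neword_reduced_append {i j k l : ι} {w₁ : NeWord G i j} {hne : j ≠ k}
    {w₂ : NeWord G k l} :
    Reduced φ (NeWord.append w₁ hne w₂).toWord ↔
      Reduced φ w₁.toWord ∧ Reduced φ w₂.toWord := by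
  simp only [Reduced, NeWord.toWord, NeWord.toList, List.mem_append]
  constructor
  · intro h
    exact ⟨fun g hg => h g (Or.inl hg), fun g hg => h g (Or.inr hg)⟩
  · rintro ⟨h₁, h₂⟩ g (hg | hg)
    · exact h₁ g hg
    · exact h₂ g hg

theorem neword_reduced_singleton {i : ι} {x : G i} {hx : x ≠ 1} :
    Reduced φ (NeWord.singleton x hx).toWord ↔ x ∉ (φ i).range := by
  simp only [Reduced, NeWord.toWord, NeWord.toList, List.mem_singleton]
  constructor
  · intro h
    exact h ⟨i, x⟩ rfl
  · rintro h g rfl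
    exact h

theorem reduced_replaceHead : ∀ {i j : ι} (x : G i) (hx1 : x ≠ 1) (w : NeWord G i j),
    x ∉ (φ i).range → Reduced φ w.toWord → Reduced φ (NeWord.replaceHead x hx1 w).toWord
  | _, _, x, hx1, NeWord.singleton _ _, hxr, _ => by
    simp only [NeWord.replaceHead]
    rw [neword_reduced_singleton]
    exact hxr
  | _, _, x, hx1, NeWord.append w₁ hne w₂, hxr, hred => by
    rw [neword_reduced_append] at hred
    simp only [NeWord.replaceHead]
    rw [neword_reduced_append]
    exact ⟨reduced_replaceHead x hx1 w₁ hxr hred.1, hred.2⟩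

theorem reduced_inv : ∀ {i j : ι} (w : NeWord G i j),
    Reduced φ w.toWord → Reduced φ w.inv.toWord
  | _, _, NeWord.singleton x hx, hred => by
    rw [neword_reduced_singleton] at hred
    simp only [NeWord.inv]
    rw [neword_reduced_singleton]
    intro ⟨c, hc⟩
    exact hred ⟨c⁻¹, by rw [map_inv, hc, inv_inv]⟩
  | _, _, NeWord.append w₁ hne w₂, hred => by
    rw [neword_reduced_append] at hred
    rw [NeWord.inv, neword_reduced_append]
    exact ⟨reduced_inv w₂ hred.2, reduced_inv w₁ hred.1⟩

/-- Push a base element from the right to the left of a reduced word. -/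
theorem push_base_left : ∀ {i j : ι} (w : NeWord G i j), Reduced φ w.toWord → ∀ h : H,
    ∃ w' : NeWord G i j, Reduced φ w'.toWord ∧
      ofCoprodI w.prod * base φ h = base φ h * ofCoprodI w'.prod
  | i, _, NeWord.singleton x hx, hred, h => by
    rw [neword_reduced_singleton] at hred
    have hx1' : (φ i h)⁻¹ * x * φ i h ≠ 1 := by
      intro hc
      apply hx
      have := congrArg (fun y => φ i h * y * (φ i h)⁻¹) hc
      simpa [mul_assoc] using this
    have hxr' : (φ i h)⁻¹ * x * φ i h ∉ (φ i).range := by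
      rintro ⟨c, hc⟩
      apply hred
      refine ⟨h * c * h⁻¹, ?_⟩
      have : x = φ i h * ((φ i h)⁻¹ * x * φ i h) * (φ i h)⁻¹ := by group
      rw [this, ← hc]
      simp [mul_assoc]
    refine ⟨NeWord.singleton ((φ i h)⁻¹ * x * φ i h) hx1', ?_, ?_⟩
    · rw [neword_reduced_singleton]; exact hxr'
    · rw [NeWord.prod_singleton, NeWord.prod_singleton]
      simp only [map_mul, map_inv, ofCoprodI_of, of_apply_eq_base]
      group
  | _, _, NeWord.append w₁ hne w₂, hred, h => by
    rw [neword_reduced_append] at hred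
    obtain ⟨w₂', hred₂, heq₂⟩ := push_base_left w₂ hred.2 h
    obtain ⟨w₁', hred₁, heq₁⟩ := push_base_left w₁ hred.1 h
    refine ⟨NeWord.append w₁' hne w₂', ?_, ?_⟩
    · rw [neword_reduced_append]; exact ⟨hred₁, hred₂⟩
    · rw [NeWord.append_prod, NeWord.append_prod, map_mul, map_mul, mul_assoc, heq₂,
        ← mul_assoc, heq₁, mul_assoc]

/-- Strip the last letter off a reduced `NeWord`. -/
theorem decompose_last : ∀ {i j : ι} (w : NeWord G i j), Reduced φ w.toWord →
    (∃ (k : ι) (w' : NeWord G i k), k ≠ j ∧ Reduced φ w'.toWord ∧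
      w.prod = w'.prod * CoprodI.of w.last) ∨ (i = j ∧ w.prod = CoprodI.of w.last)
  | _, _, NeWord.singleton x hx, _ => Or.inr ⟨rfl, by simp⟩
  | _, _, NeWord.append w₁ hne w₂, hred => by
    rw [neword_reduced_append] at hred
    rcases decompose_last w₂ hred.2 with ⟨k, w₂', hkj, hred₂, heq₂⟩ | ⟨rfl, heq₂⟩
    · refine Or.inl ⟨k, NeWord.append w₁ hne w₂', hkj, ?_, ?_⟩
      · rw [neword_reduced_append]; exact ⟨hred.1, hred₂⟩
      · simp [heq₂, mul_assoc]
    · exact Or.inl ⟨_, w₁, hne, hred.1, by simp [heq₂]⟩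

end PushoutCenter

section PushoutCenter2

variable {ι : Type*} {G : ι → Type*} [∀ i, Group (G i)] {H : Type*} [Group H]
  (φ : ∀ i, H →* G i)

/-- Two reduced words representing the same element of the pushout (up to left multiplication
by base elements) have the same sequence of indices. -/
theorem reduced_indices_eq (hφ : ∀ i, Function.Injective (φ i)) {W₁ W₂ : CoprodI.Word G}
    (h₁ : Reduced φ W₁) (h₂ : Reduced φ W₂) {a b : H}
    (heq : base φ a * ofCoprodI W₁.prod = base φ b * ofCoprodI W₂.prod) :
    W₁.toList.map Sigma.fst = W₂.toList.map Sigma.fst := by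
  classical
  obtain ⟨d⟩ := NormalWord.transversal_nonempty φ hφ
  obtain ⟨n₁, hn₁, hm₁⟩ := h₁.exists_normalWord_prod_eq d
  obtain ⟨n₂, hn₂, hm₂⟩ := h₂.exists_normalWord_prod_eq d
  have : (a • n₁ : NormalWord d).prod = (b • n₂ : NormalWord d).prod := by
    rw [NormalWord.prod_base_smul, NormalWord.prod_base_smul, hn₁, hn₂, heq]
  have h12 : (a • n₁ : NormalWord d) = b • n₂ := NormalWord.prod_injective this
  have hl : n₁.toList = n₂.toList := by
    have e1 : (a • n₁ : NormalWord d).toList = n₁.toList := rfl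
    have e2 : (b • n₂ : NormalWord d).toList = n₂.toList := rfl
    rw [← e1, ← e2, h12]
  rw [← hm₁, ← hm₂, hl]

/-- The first index of a reduced `NeWord` representation is determined by the element. -/
theorem reduced_fst_eq (hφ : ∀ i, Function.Injective (φ i)) {i₁ j₁ i₂ j₂ : ι}
    {w₁ : NeWord G i₁ j₁} {w₂ : NeWord G i₂ j₂}
    (h₁ : Reduced φ w₁.toWord) (h₂ : Reduced φ w₂.toWord) {a b : H}
    (heq : base φ a * ofCoprodI w₁.prod = base φ b * ofCoprodI w₂.prod) : i₁ = i₂ := by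
  have h := reduced_indices_eq φ hφ h₁ h₂ heq
  have e1 : (w₁.toWord.toList.map Sigma.fst).head? = some i₁ := by
    rw [List.head?_map]
    show w₁.toList.head?.map Sigma.fst = _
    rw [NeWord.toList_head?]
    rfl
  have e2 : (w₂.toWord.toList.map Sigma.fst).head? = some i₂ := by
    rw [List.head?_map]
    show w₂.toList.head?.map Sigma.fst = _
    rw [NeWord.toList_head?]
    rfl
  rw [h, e2] at e1
  exact (Option.some_injective _ e1).symm

/-- Every element of the pushout not in the image of the base is represented by a base element
times a reduced nonempty word. -/
theorem exists_reduced_neWord (hφ : ∀ i, Function.Injective (φ i)) {x : PushoutI φ}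
    (hx : x ∉ (base φ).range) :
    ∃ (i j : ι) (w : NeWord G i j) (h : H), Reduced φ w.toWord ∧
      x = base φ h * ofCoprodI w.prod := by
  classical
  obtain ⟨d⟩ := NormalWord.transversal_nonempty φ hφ
  set n : NormalWord d := x • NormalWord.empty with hn
  have hxn : x = n.prod := by
    rw [hn, NormalWord.prod_smul, NormalWord.prod_empty, mul_one]
  have hne : n.toWord ≠ CoprodI.Word.empty := by
    intro h
    apply hx
    refine ⟨n.head, ?_⟩
    rw [hxn]
    show base φ n.head = base φ n.head * ofCoprodI n.toWord.prod
    rw [h, CoprodI.Word.prod_empty, map_one, mul_one]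
  obtain ⟨i, j, w, hw⟩ := CoprodI.NeWord.of_word n.toWord hne
  have hred : Reduced φ w.toWord := by
    rw [hw]
    intro g hg h1
    have hset : g.2 ∈ d.set g.1 := n.normalized g.1 g.2 (by exact hg)
    have hne1 : g.2 ≠ 1 := n.toWord.ne_one g hg
    apply hne1
    have hcompl := d.compl g.1
    have hu := hcompl.existsUnique g.2
    obtain ⟨p, hp, hup⟩ := hu
    have h1' : ((⟨⟨g.2, h1⟩, ⟨1, d.one_mem g.1⟩⟩ : (φ g.1).range × d.set g.1)) = p :=
      hup _ (by simp)
    have h2' : ((⟨⟨1, Subgroup.one_mem _⟩, ⟨g.2, hset⟩⟩ : (φ g.1).range × d.set g.1)) = p :=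
      hup _ (by simp)
    rw [← h2'] at h1'
    have := congrArg (fun q => (q.1 : G g.1)) h1'
    simpa using this
  refine ⟨i, j, w, n.head, hred, ?_⟩
  rw [hxn]
  show base φ n.head * ofCoprodI n.toWord.prod = base φ n.head * ofCoprodI w.toWord.prod
  rw [hw]

/-- In an amalgam of at least two groups along proper injective maps, every central element
lies in the image of the base group. -/
theorem center_le_base_range [Nontrivial ι] (hφ : ∀ i, Function.Injective (φ i))
    (hprop : ∀ i, ∃ g : G i, g ∉ (φ i).range) {x : PushoutI φ}
    (hx : x ∈ Subgroup.center (PushoutI φ)) : x ∈ (base φ).range := by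
  by_contra hxr
  obtain ⟨i₁, j₁, w, h, hred, hxe⟩ := exists_reduced_neWord φ hφ hxr
  obtain ⟨j, hj⟩ := exists_ne i₁
  obtain ⟨b, hb⟩ := hprop j
  have hb1 : b ≠ 1 := by rintro rfl; exact hb (Subgroup.one_mem _)
  have hbφ : b * φ j h ∉ (φ j).range := fun ⟨c, hc⟩ =>
    hb ⟨c * h⁻¹, by rw [map_mul, hc, map_inv, mul_assoc, mul_inv_cancel, mul_one]⟩
  have hbφ1 : b * φ j h ≠ 1 := fun hc => hbφ (hc ▸ Subgroup.one_mem _)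
  set wL : NeWord G j j₁ := NeWord.append (NeWord.singleton (b * φ j h) hbφ1) hj w with hwL
  have hredL : Reduced φ wL.toWord := by
    rw [hwL, neword_reduced_append, neword_reduced_singleton]
    exact ⟨hbφ, hred⟩
  have hLprod : ofCoprodI wL.prod = of j b * x := by
    rw [hwL, NeWord.append_prod, NeWord.prod_singleton, map_mul, ofCoprodI_of, map_mul,
      of_apply_eq_base, hxe, mul_assoc]
  have hcomm : of j b * x = x * of j b := Subgroup.mem_center_iff.mp hx (of j b)
  -- now analyse `x * of j b`
  by_cases hjj : j₁ = j
  · subst hjj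
    by_cases hlb : w.last * b ∈ (φ j₁).range
    · -- merging case
      obtain ⟨c, hc⟩ := hlb
      rcases decompose_last φ w hred with ⟨k, w', hkj, hred', hdec⟩ | ⟨hij, _⟩
      · obtain ⟨w'', hred'', hpush⟩ := push_base_left φ w' hred' c
        have key : x * of j₁ b = base φ (h * c) * ofCoprodI w''.prod := by
          rw [hxe, hdec, map_mul, ofCoprodI_of, mul_assoc, mul_assoc, ← map_mul, ← hc,
            of_apply_eq_base, hpush, map_mul, ← mul_assoc]
        have : base φ 1 * ofCoprodI wL.prod = base φ (h * c) * ofCoprodI w''.prod := by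
          rw [map_one, one_mul, hLprod, hcomm, key]
        exact hj (reduced_fst_eq φ hφ hredL hred'' this)
      · exact hj hij.symm
    · -- no merging: modify the last letter
      have hbl1 : b⁻¹ * w.inv.head ≠ 1 := by
        rw [NeWord.inv_head]
        intro hc
        apply hlb
        have h1 : w.last * b = 1 := by
          have := congrArg Inv.inv hc
          simpa [mul_inv_rev] using this
        rw [h1]; exact Subgroup.one_mem _
      have hblr : b⁻¹ * w.inv.head ∉ (φ j₁).range := by
        rw [NeWord.inv_head]
        rintro ⟨c, hc⟩
        apply hlb
        refine ⟨c⁻¹, ?_⟩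
        rw [map_inv, hc]
        group
      set w' : NeWord G i₁ j₁ := (NeWord.mulHead w.inv b⁻¹ hbl1).inv with hw'
      have hred' : Reduced φ w'.toWord := by
        rw [hw']
        refine reduced_inv φ _ ?_
        unfold NeWord.mulHead
        refine reduced_replaceHead φ _ _ _ ?_ (reduced_inv φ _ hred)
        rw [NeWord.inv_head] at hblr ⊢
        exact hblr
      have hw'prod : w'.prod = w.prod * CoprodI.of b := by
        rw [hw', NeWord.inv_prod, NeWord.mulHead_prod, NeWord.inv_prod]
        rw [mul_inv_rev, inv_inv]
        congr 1
        rw [← map_inv, inv_inv]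
      have : base φ 1 * ofCoprodI wL.prod = base φ h * ofCoprodI w'.prod := by
        rw [map_one, one_mul, hLprod, hcomm, hxe, hw'prod, map_mul, ofCoprodI_of, mul_assoc]
      exact hj (reduced_fst_eq φ hφ hredL hred' this)
  · -- append case
    set wR : NeWord G i₁ j := NeWord.append w hjj (NeWord.singleton b hb1) with hwR
    have hredR : Reduced φ wR.toWord := by
      rw [hwR, neword_reduced_append, neword_reduced_singleton]
      exact ⟨hred, hb⟩
    have : base φ 1 * ofCoprodI wL.prod = base φ h * ofCoprodI wR.prod := by
      rw [map_one, one_mul, hLprod, hcomm, hxe, hwR, NeWord.append_prod, NeWord.prod_singleton,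
        map_mul, ofCoprodI_of, mul_assoc]
    exact hj (reduced_fst_eq φ hφ hredL hredR this)

end PushoutCenter2

section RaagInfra

open scoped Classical

variable {V : Type*} (G : SimpleGraph V)

theorem gen_comm {u w : V} (h : G.Adj u w) : Commute (gen G u) (gen G w) := by
  rw [← commutatorElement_eq_one_iff_commute, commutatorElement_def]
  have hmem : FreeGroup.of u * FreeGroup.of w * (FreeGroup.of u)⁻¹ * (FreeGroup.of w)⁻¹ ∈
      Subgroup.normalClosure (raagRels G) :=
    Subgroup.subset_normalClosure ⟨u, w, h, rfl⟩
  have h1 : PresentedGroup.mk (raagRels G)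
      (FreeGroup.of u * FreeGroup.of w * (FreeGroup.of u)⁻¹ * (FreeGroup.of w)⁻¹) = 1 :=
    (QuotientGroup.eq_one_iff _).2 hmem
  simpa [gen, PresentedGroup.of, map_mul, map_inv] using h1

/-- Universal property of the RAAG. -/
noncomputable def raagLift {K : Type*} [Group K] (f : V → K)
    (hf : ∀ u w, G.Adj u w → Commute (f u) (f w)) : Raag G →* K :=
  PresentedGroup.toGroup (f := f) (by
    rintro r ⟨u, w, huw, rfl⟩
    simp only [map_mul, map_inv, FreeGroup.lift_apply_of]
    rw [← commutatorElement_def, commutatorElement_eq_one_iff_commute]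
    exact hf u w huw)

@[simp]
theorem raagLift_gen {K : Type*} [Group K] (f : V → K)
    (hf : ∀ u w, G.Adj u w → Commute (f u) (f w)) (u : V) :
    raagLift G f hf (gen G u) = f u :=
  PresentedGroup.toGroup.of _

theorem raag_hom_ext {K : Type*} [Group K] {f g : Raag G →* K}
    (h : ∀ u, f (gen G u) = g (gen G u)) : f = g :=
  PresentedGroup.ext h

theorem closure_range_gen : Subgroup.closure (Set.range (gen G)) = ⊤ :=
  PresentedGroup.closure_range_of _

/-- The inclusion of the RAAG of an induced subgraph. -/
noncomputable def inclTop (S : Set V) : Raag (G.induce S) →* Raag G :=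
  raagLift _ (fun u => gen G u.1) (fun _ _ h => gen_comm G h)

/-- The retraction onto the RAAG of an induced subgraph. -/
noncomputable def retr (S : Set V) : Raag G →* Raag (G.induce S) :=
  raagLift _ (fun u => if h : u ∈ S then gen _ (⟨u, h⟩ : S) else 1) (by
    intro u w h
    try dsimp only
    by_cases hu : u ∈ S
    · by_cases hw : w ∈ S
      · rw [dif_pos hu, dif_pos hw]
        exact gen_comm _ (show (G.induce S).Adj ⟨u, hu⟩ ⟨w, hw⟩ from h)
      · rw [dif_neg hw]; exact Commute.one_right _
    · rw [dif_neg hu]; exact Commute.one_left _)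

/-- The inclusion between RAAGs of nested induced subgraphs. -/
noncomputable def incl {S T : Set V} (hST : S ⊆ T) :
    Raag (G.induce S) →* Raag (G.induce T) :=
  raagLift _ (fun u => gen _ (⟨u.1, hST u.2⟩ : T))
    (fun u w h => gen_comm _ (show (G.induce T).Adj ⟨u.1, _⟩ ⟨w.1, _⟩ from h))

@[simp]
theorem inclTop_gen (S : Set V) (u : S) : inclTop G S (gen _ u) = gen G u.1 :=
  raagLift_gen _ _ _ _

@[simp]
theorem retr_gen (S : Set V) (u : V) :
    retr G S (gen G u) = if h : u ∈ S then gen (G.induce S) (⟨u, h⟩ : S) else 1 :=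
  raagLift_gen _ _ _ _

@[simp]
theorem incl_gen {S T : Set V} (hST : S ⊆ T) (u : S) :
    incl G hST (gen _ u) = gen _ (⟨u.1, hST u.2⟩ : T) :=
  raagLift_gen _ _ _ _

theorem retr_comp_inclTop (S : Set V) :
    (retr G S).comp (inclTop G S) = MonoidHom.id _ := by
  apply raag_hom_ext
  intro u
  simp only [MonoidHom.comp_apply, MonoidHom.id_apply, inclTop_gen, retr_gen]
  rw [dif_pos u.2]

theorem inclTop_injective (S : Set V) : Function.Injective (inclTop G S) := by
  intro a b hab
  calc a = (retr G S).comp (inclTop G S) a := by rw [retr_comp_inclTop]; rfl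
  _ = (retr G S).comp (inclTop G S) b := by
        simp only [MonoidHom.comp_apply, hab]
  _ = b := by rw [retr_comp_inclTop]; rfl

theorem inclTop_comp_incl {S T : Set V} (hST : S ⊆ T) :
    (inclTop G T).comp (incl G hST) = inclTop G S := by
  apply raag_hom_ext
  intro u
  simp

theorem incl_injective {S T : Set V} (hST : S ⊆ T) : Function.Injective (incl G hST) := by
  have h : Function.Injective ((inclTop G T).comp (incl G hST)) := by
    rw [inclTop_comp_incl]
    exact inclTop_injective G S
  exact fun a b hab => h (by simp only [MonoidHom.comp_apply, hab])

theorem range_inclTop (S : Set V) : (inclTop G S).range = Asub G S := by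
  rw [MonoidHom.range_eq_map, ← closure_range_gen (G.induce S), MonoidHom.map_closure]
  congr 1
  ext x
  constructor
  · rintro ⟨_, ⟨u, rfl⟩, rfl⟩
    exact ⟨u.1, u.2, by simp⟩
  · rintro ⟨u, hu, rfl⟩
    exact ⟨gen _ (⟨u, hu⟩ : S), ⟨_, rfl⟩, by simp⟩

/-- The exponent-sum homomorphism at a vertex. -/
noncomputable def expAt (v : V) : Raag G →* Multiplicative ℤ :=
  raagLift _ (fun u => Multiplicative.ofAdd (if u = v then 1 else 0))
    (fun _ _ _ => Commute.all _ _)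

@[simp]
theorem expAt_gen (v u : V) :
    expAt G v (gen G u) = Multiplicative.ofAdd (if u = v then 1 else 0) :=
  raagLift_gen _ _ _ _

theorem gen_ne_one (v : V) : gen G v ≠ 1 := by
  intro h
  have h2 := congrArg (expAt G v) h
  rw [map_one, expAt_gen, if_pos rfl] at h2
  exact absurd h2 (by decide)

theorem gen_not_mem_incl_range {S T : Set V} (hST : S ⊆ T) {t : V} (htT : t ∈ T)
    (htS : t ∉ S) : gen (G.induce T) ⟨t, htT⟩ ∉ (incl G hST).range := by
  rintro ⟨y, hy⟩
  have hcomp : (expAt (G.induce T) ⟨t, htT⟩).comp (incl G hST) = 1 := by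
    apply raag_hom_ext
    intro u
    simp only [MonoidHom.comp_apply, incl_gen, MonoidHom.one_apply, expAt_gen]
    rw [if_neg (fun hc => htS (by rw [← show u.1 = t from congrArg Subtype.val hc]; exact u.2))]
    rfl
  have h1 : expAt (G.induce T) ⟨t, htT⟩ (gen (G.induce T) ⟨t, htT⟩) =
      Multiplicative.ofAdd 1 := by rw [expAt_gen, if_pos rfl]
  rw [← hy] at h1
  have h2 : (expAt (G.induce T) ⟨t, htT⟩).comp (incl G hST) y = Multiplicative.ofAdd 1 := h1
  rw [hcomp, MonoidHom.one_apply] at h2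
  exact absurd h2.symm (by decide)

end RaagInfra

section Amalgam

open scoped Classical

variable {V : Type*} (G : SimpleGraph V)

theorem lk_subset_st (v : V) : lk G v ⊆ st G v := fun _ hu => Set.mem_insert_of_mem _ hu

theorem lk_subset_compl (v : V) : lk G v ⊆ ({v}ᶜ : Set V) := by
  intro u hu
  simp only [Set.mem_compl_iff, Set.mem_singleton_iff]
  rintro rfl
  exact G.irrefl hu

theorem mem_st_self (v : V) : v ∈ st G v := Set.mem_insert _ _

theorem mem_st_iff {v u : V} : u ∈ st G v ↔ u = v ∨ G.Adj v u := by
  simp [st, SimpleGraph.mem_neighborSet]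

variable (v : V)

/-- The two pieces of the amalgam decomposition at a vertex: the star and the complement. -/
def sideSet : Bool → Set V := fun b => cond b (st G v) ({v}ᶜ)

/-- The maps from the link RAAG into the two pieces. -/
noncomputable def sideMap : ∀ b : Bool, Raag (G.induce (lk G v)) →* Raag (G.induce (sideSet G v b))
  | true => incl G (lk_subset_st G v)
  | false => incl G (lk_subset_compl G v)

/-- The canonical map from the amalgam to the RAAG. -/
noncomputable def toRaag : PushoutI (sideMap G v) →* Raag G :=
  PushoutI.lift (fun b => inclTop G (sideSet G v b)) (inclTop G (lk G v)) (by
    intro b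
    cases b
    · exact inclTop_comp_incl G (lk_subset_compl G v)
    · exact inclTop_comp_incl G (lk_subset_st G v))

theorem of_false_eq_of_true (u : V) (hu : u ∈ lk G v) :
    PushoutI.of (φ := sideMap G v) false (gen _ ⟨u, lk_subset_compl G v hu⟩) =
    PushoutI.of (φ := sideMap G v) true (gen _ ⟨u, lk_subset_st G v hu⟩) := by
  have hf : sideMap G v false (gen _ (⟨u, hu⟩ : lk G v)) =
      gen (G.induce (sideSet G v false)) ⟨u, lk_subset_compl G v hu⟩ :=
    incl_gen G (lk_subset_compl G v) ⟨u, hu⟩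
  have ht : sideMap G v true (gen _ (⟨u, hu⟩ : lk G v)) =
      gen (G.induce (sideSet G v true)) ⟨u, lk_subset_st G v hu⟩ :=
    incl_gen G (lk_subset_st G v) ⟨u, hu⟩
  rw [← hf, of_apply_eq_base, ← ht, of_apply_eq_base]

/-- The canonical map from the RAAG to the amalgam. -/
noncomputable def fromRaag : Raag G →* PushoutI (sideMap G v) :=
  raagLift G (fun u => if h : u = v
      then PushoutI.of (φ := sideMap G v) true (gen _ ⟨v, mem_st_self G v⟩)
      else PushoutI.of (φ := sideMap G v) false (gen _ ⟨u, by simpa [sideSet] using h⟩))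
    (by
      intro u w h
      try dsimp only
      by_cases hu : u = v <;> by_cases hw : w = v
      · exact absurd h (by rw [hu, hw]; exact G.irrefl)
      · rw [dif_pos hu, dif_neg hw]
        have hvw : G.Adj v w := hu ▸ h
        have hlk : w ∈ lk G v := hvw
        rw [show (⟨w, by simpa [sideSet] using hw⟩ : ↥(sideSet G v false)) = ⟨w, lk_subset_compl G v hlk⟩
          from Subtype.ext rfl, of_false_eq_of_true]
        · exact (gen_comm _
            (show (G.induce (sideSet G v true)).Adj ⟨v, mem_st_self G v⟩
              ⟨w, lk_subset_st G v hlk⟩ from hvw)).map _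
        · exact hlk
      · rw [dif_neg hu, dif_pos hw]
        have hvu : G.Adj v u := hw ▸ h.symm
        have hlk : u ∈ lk G v := hvu
        rw [show (⟨u, by simpa [sideSet] using hu⟩ : ↥(sideSet G v false)) = ⟨u, lk_subset_compl G v hlk⟩
          from Subtype.ext rfl, of_false_eq_of_true]
        · exact ((gen_comm _
            (show (G.induce (sideSet G v true)).Adj ⟨v, mem_st_self G v⟩
              ⟨u, lk_subset_st G v hlk⟩ from hvu)).map _).symm
        · exact hlk
      · rw [dif_neg hu, dif_neg hw]
        exact (gen_comm _ (show (G.induce (sideSet G v false)).Adj ⟨u, by simpa [sideSet] using hu⟩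
          ⟨w, by simpa [sideSet] using hw⟩ from h)).map _)

@[simp]
theorem fromRaag_gen (u : V) :
    fromRaag G v (gen G u) = if h : u = v
      then PushoutI.of (φ := sideMap G v) true (gen _ ⟨v, mem_st_self G v⟩)
      else PushoutI.of (φ := sideMap G v) false (gen _ ⟨u, by simpa [sideSet] using h⟩) :=
  raagLift_gen _ _ _ _

theorem toRaag_comp_fromRaag : (toRaag G v).comp (fromRaag G v) = MonoidHom.id _ := by
  apply raag_hom_ext
  intro u
  simp only [MonoidHom.comp_apply, MonoidHom.id_apply, fromRaag_gen]
  by_cases hu : u = v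
  · rw [dif_pos hu, toRaag, PushoutI.lift_of, inclTop_gen, hu]
  · rw [dif_neg hu, toRaag, PushoutI.lift_of, inclTop_gen]

theorem fromRaag_comp_toRaag : (fromRaag G v).comp (toRaag G v) = MonoidHom.id _ := by
  apply PushoutI.hom_ext_nonempty
  intro b
  cases b
  · apply raag_hom_ext
    intro u
    have hne : u.1 ≠ v := fun hc =>
      (show u.1 ∈ ({v}ᶜ : Set V) from u.2) (by simp [hc])
    simp only [MonoidHom.comp_apply, MonoidHom.id_apply]
    rw [toRaag, PushoutI.lift_of, inclTop_gen, fromRaag_gen, dif_neg hne,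
      show (⟨u.1, by simpa using hne⟩ : ↥(sideSet G v false)) = u from Subtype.ext rfl]
  · apply raag_hom_ext
    intro u
    simp only [MonoidHom.comp_apply, MonoidHom.id_apply]
    rw [toRaag, PushoutI.lift_of, inclTop_gen, fromRaag_gen]
    by_cases hu : u.1 = v
    · rw [dif_pos hu,
        show (⟨v, mem_st_self G v⟩ : ↥(sideSet G v true)) = u from Subtype.ext hu.symm]
    · rw [dif_neg hu]
      have hlk : u.1 ∈ lk G v := by
        have h' : u.1 ∈ st G v := u.2
        rw [mem_st_iff] at h'
        rcases h' with h | h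
        · exact absurd h hu
        · exact h
      rw [show (⟨u.1, by simpa [sideSet] using hu⟩ : ↥(sideSet G v false)) =
          ⟨u.1, lk_subset_compl G v hlk⟩ from Subtype.ext rfl, of_false_eq_of_true,
        show (⟨u.1, lk_subset_st G v hlk⟩ : ↥(sideSet G v true)) = u from Subtype.ext rfl]
      exact hlk

theorem center_le_Asub_st {v u₀ : V} (hu : u₀ ≠ v) (hadj : ¬ G.Adj v u₀) {x : Raag G}
    (hx : x ∈ Subgroup.center (Raag G)) : x ∈ Asub G (st G v) := by
  have hinj : ∀ b, Function.Injective (sideMap G v b) := by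
    intro b
    cases b
    · exact incl_injective G (lk_subset_compl G v)
    · exact incl_injective G (lk_subset_st G v)
  have hprop : ∀ b, ∃ g, g ∉ (sideMap G v b).range := by
    intro b
    cases b
    · exact ⟨gen _ ⟨u₀, by simpa [sideSet] using hu⟩,
        gen_not_mem_incl_range G (lk_subset_compl G v) _ (fun hc => hadj hc)⟩
    · exact ⟨gen _ ⟨v, mem_st_self G v⟩,
        gen_not_mem_incl_range G (lk_subset_st G v) _ (fun hc => G.irrefl hc)⟩
  have hsur : Function.Surjective (fromRaag G v) := fun y =>
    ⟨toRaag G v y, by rw [← MonoidHom.comp_apply, fromRaag_comp_toRaag]; rfl⟩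
  have hcen : fromRaag G v x ∈ Subgroup.center (PushoutI (sideMap G v)) := by
    rw [Subgroup.mem_center_iff]
    intro g
    obtain ⟨z, rfl⟩ := hsur g
    rw [← map_mul, ← map_mul, Subgroup.mem_center_iff.mp hx z]
  obtain ⟨c, hc⟩ := center_le_base_range (sideMap G v) hinj hprop hcen
  have hx2 : x = inclTop G (lk G v) c := by
    have h1 := congrArg (toRaag G v) hc
    have hbase : toRaag G v (base (sideMap G v) c) = inclTop G (lk G v) c :=
      PushoutI.lift_base _ _ _ _
    rw [hbase] at h1
    rw [← MonoidHom.comp_apply, toRaag_comp_fromRaag, MonoidHom.id_apply] at h1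
    exact h1.symm
  rw [hx2]
  have hmem : inclTop G (lk G v) c ∈ (inclTop G (lk G v)).range := ⟨c, rfl⟩
  rw [range_inclTop] at hmem
  exact Subgroup.closure_mono (Set.image_mono (lk_subset_st G v)) hmem

end Amalgam

section Final

open scoped Classical

variable {V : Type*} (G : SimpleGraph V)

/-- The retraction of the RAAG onto the special subgroup of a set of vertices. -/
noncomputable def rho (S : Set V) : Raag G →* Raag G := (inclTop G S).comp (retr G S)

theorem rho_gen (S : Set V) (u : V) :
    rho G S (gen G u) = if u ∈ S then gen G u else 1 := by
  rw [rho, MonoidHom.comp_apply, retr_gen]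
  by_cases hu : u ∈ S
  · rw [dif_pos hu, if_pos hu, inclTop_gen]
  · rw [dif_neg hu, if_neg hu, map_one]

theorem rho_fixed {S : Set V} {x : Raag G} (hx : x ∈ Asub G S) : rho G S x = x := by
  induction hx using Subgroup.closure_induction with
  | mem y hy =>
    obtain ⟨u, hu, rfl⟩ := hy
    rw [rho_gen, if_pos hu]
  | one => rw [map_one]
  | mul a b _ _ iha ihb => rw [map_mul, iha, ihb]
  | inv a _ iha => rw [map_inv, iha]

theorem rho_comp (S T : Set V) : (rho G S).comp (rho G T) = rho G (S ∩ T) := by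
  apply raag_hom_ext
  intro u
  rw [MonoidHom.comp_apply, rho_gen, rho_gen]
  by_cases hT : u ∈ T
  · rw [if_pos hT, rho_gen]
    by_cases hS : u ∈ S
    · rw [if_pos hS, if_pos ⟨hS, hT⟩]
    · rw [if_neg hS, if_neg (fun hc => hS hc.1)]
  · rw [if_neg hT, map_one, if_neg (fun hc => hT hc.2)]

theorem rho_empty (x : Raag G) : rho G (∅ : Set V) x = 1 := by
  have h : rho G (∅ : Set V) = 1 := by
    apply raag_hom_ext
    intro u
    rw [rho_gen, if_neg (Set.notMem_empty u), MonoidHom.one_apply]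
  rw [h, MonoidHom.one_apply]

theorem Asub_univ : Asub G Set.univ = ⊤ := by
  rw [Asub, Set.image_univ, closure_range_gen]

theorem gen_mem_center_of_dominating {v : V} (hv : ∀ w, w ≠ v → G.Adj v w) :
    gen G v ∈ Subgroup.center (Raag G) := by
  rw [Subgroup.mem_center_iff]
  intro g
  have hg : g ∈ Subgroup.closure (Set.range (gen G)) := by
    rw [closure_range_gen]; trivial
  induction hg using Subgroup.closure_induction with
  | mem y hy =>
    obtain ⟨u, rfl⟩ := hy
    by_cases hu : u = v
    · rw [hu]
    · exact ((gen_comm G (hv u hu)).symm).eq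
  | one => rw [one_mul, mul_one]
  | mul a b _ _ iha ihb => rw [mul_assoc, ihb, ← mul_assoc, iha, mul_assoc]
  | inv a _ iha =>
    have := congrArg (fun y => a⁻¹ * y * a⁻¹) iha
    simpa [mul_assoc] using this.symm

theorem center_eq_bot_of_not_dominating [Fintype V]
    (hdom : ∀ v : V, ∃ w, w ≠ v ∧ ¬G.Adj v w) :
    Subgroup.center (Raag G) = ⊥ := by
  rw [eq_bot_iff]
  intro x hx
  rw [Subgroup.mem_bot]
  have hst : ∀ v : V, x ∈ Asub G (st G v) := fun v => by
    obtain ⟨w, hw1, hw2⟩ := hdom v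
    exact center_le_Asub_st G hw1 hw2 hx
  have key : ∀ s : Finset V, rho G (⋂ v ∈ s, st G v) x = x := by
    intro s
    induction s using Finset.induction_on with
    | empty =>
      rw [show (⋂ v ∈ (∅ : Finset V), st G v) = Set.univ by simp]
      exact rho_fixed G (by rw [Asub_univ]; trivial)
    | insert a s ha ih =>
      rw [show (⋂ v ∈ insert a s, st G v) = st G a ∩ ⋂ v ∈ s, st G v by simp]
      rw [← rho_comp, MonoidHom.comp_apply, ih]
      exact rho_fixed G (hst a)
  have hempty : (⋂ v ∈ (Finset.univ : Finset V), st G v) = (∅ : Set V) := by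
    ext w
    simp only [Set.mem_iInter, Set.mem_empty_iff_false, iff_false, not_forall]
    obtain ⟨u, hu1, hu2⟩ := hdom w
    refine ⟨u, Finset.mem_univ u, ?_⟩
    intro hmem
    rcases (mem_st_iff G).mp hmem with rfl | hadj
    · exact hu1 rfl
    · exact hu2 hadj.symm
  have h1 := key Finset.univ
  rw [hempty, rho_empty] at h1
  exact h1.symm

/- Combinatorial part -/

theorem vle_refl (v : V) : vle G v v := fun _ hu => Set.mem_insert_of_mem _ hu

theorem vle_trans {a b c : V} (hab : vle G a b) (hbc : vle G b c) : vle G a c := by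
  intro x hx
  have hx' := hab hx
  rw [mem_st_iff] at hx' ⊢
  rcases hx' with rfl | hadj
  · -- x = b
    have h2 := hbc (show a ∈ lk G x from (show G.Adj a x from hx).symm)
    rw [mem_st_iff] at h2
    rcases h2 with rfl | hca
    · exact Or.inr (show G.Adj a x from hx)
    · have h3 := hab (show c ∈ lk G a from hca.symm)
      rw [mem_st_iff] at h3
      rcases h3 with rfl | hbc'
      · exact Or.inl rfl
      · exact Or.inr hbc'.symm
  · exact (mem_st_iff G).mp (hbc hadj)

theorem exists_maximal_above [Finite V] (w : V) :
    ∃ m, vle G w m ∧ IsMaximalClass G m := by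
  let r : V → V → Prop := fun a b => vle G b a ∧ ¬vle G a b
  haveI : IsTrans V r := ⟨by
    rintro a b c ⟨h1, h2⟩ ⟨h3, h4⟩
    exact ⟨vle_trans G h3 h1, fun hc => h2 (vle_trans G hc h3)⟩⟩
  haveI : IsIrrefl V r := ⟨fun a ⟨h1, h2⟩ => h2 h1⟩
  have hwf : WellFounded r := Finite.wellFounded_of_trans_of_irrefl r
  obtain ⟨m, hm, hmin⟩ := hwf.has_min {x | vle G w x} ⟨w, vle_refl G w⟩
  refine ⟨m, hm, ?_⟩
  intro z hz
  by_contra hc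
  exact hmin z (vle_trans G hm hz) ⟨hz, hc⟩

theorem unique_max_implies_dominating [Finite V] (hconn : G.Connected)
    (h : ∀ v w, IsMaximalClass G v → IsMaximalClass G w → vequiv G v w) :
    ∃ v, ∀ w, w ≠ v → G.Adj v w := by
  obtain ⟨v₀⟩ : Nonempty V := hconn.nonempty
  obtain ⟨m, _, hmax⟩ := exists_maximal_above G v₀
  refine ⟨m, ?_⟩
  have hallle : ∀ w, vle G w m := by
    intro w
    obtain ⟨m', hwm', hmax'⟩ := exists_maximal_above G w
    exact vle_trans G hwm' (h m' m hmax' hmax).1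
  intro w hw
  obtain ⟨u, hu⟩ : ∃ u, G.Adj w u := by
    obtain ⟨p⟩ := hconn w m
    cases p with
    | nil => exact absurd rfl hw
    | cons hadj _ => exact ⟨_, hadj⟩
  have h1 := hallle w (show u ∈ lk G w from hu)
  rw [mem_st_iff] at h1
  rcases h1 with rfl | hmu
  · exact hu.symm
  · have h2 := hallle u (show w ∈ lk G u from hu.symm)
    rw [mem_st_iff] at h2
    rcases h2 with rfl | hmw
    · exact absurd rfl hw
    · exact hmw

theorem dominating_implies_unique_max {v : V} (hv : ∀ w, w ≠ v → G.Adj v w) :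
    ∀ a b, IsMaximalClass G a → IsMaximalClass G b → vequiv G a b := by
  have hle : ∀ w, vle G w v := by
    intro w x hx
    rw [mem_st_iff]
    by_cases hxv : x = v
    · exact Or.inl hxv
    · exact Or.inr (hv x hxv)
  intro a b ha hb
  have hva : vle G v a := ha v (hle a)
  have hvb : vle G v b := hb v (hle b)
  exact ⟨vle_trans G (hle a) hvb, vle_trans G (hle b) hva⟩

end Final

/-- the following are equivalent: (i) there is exactly one maximal equivalence
class; (ii) some vertex is adjacent to every other vertex; (iii) the center of `A_Γ` is
nontrivial. -/
theorem unique_maximal_class_iff_center_nontrivial {V : Type*} [Fintype V] [Nonempty V]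
    (G : SimpleGraph V) (hconn : G.Connected) :
    ((∀ v w : V, IsMaximalClass G v → IsMaximalClass G w → vequiv G v w) ↔
      (∃ v : V, ∀ w : V, w ≠ v → G.Adj v w)) ∧
    ((∃ v : V, ∀ w : V, w ≠ v → G.Adj v w) ↔ Subgroup.center (Raag G) ≠ ⊥) := by
  constructor
  · constructor
    · exact fun h => unique_max_implies_dominating G hconn h
    · rintro ⟨v, hv⟩
      exact dominating_implies_unique_max G hv
  · constructor
    · rintro ⟨v, hv⟩ hbot
      have hcen : gen G v ∈ Subgroup.center (Raag G) := gen_mem_center_of_dominating G hv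
      rw [hbot, Subgroup.mem_bot] at hcen
      exact gen_ne_one G v hcen
    · intro hne
      by_contra hdom
      push_neg at hdom
      exact hne (center_eq_bot_of_not_dominating G hdom)


end RaagPaper
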